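/- arXiv:2403.06152 — 2 statements merged into one kernel-verified Lean document; each statement's English description precedes it below -/
import Mathlib

section
/- Let v = (I−A)^{-1}B − 𝟙_n ≠ 0 and c ∈ ℝ^n. The unconstrained minimizer of u ↦ ‖v u + (I−A)^{-1}c‖₂² is u* = −v^⊤(I−A)^{-1}c / ‖v‖₂², and the corresponding optimal state x* = (I−A)^{-1}(Bu* + c) satisfies x* = (I − A − (1/(v^⊤𝟙_n)) B v^⊤)^{-1} c whenever v^⊤𝟙_n ≠ 0 and the latter matrix is invertible. -/
open Matrix Finset

lemma vecMulVec_mulVec' {n : ℕ} (B v x : Fin n → ℝ) :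
    Matrix.vecMulVec B v *ᵥ x = (v ⬝ᵥ x) • B := by
  funext i
  simp [Matrix.vecMulVec, Matrix.mulVec, dotProduct, Finset.mul_sum, mul_comm, mul_left_comm]

/-- With `v = (I-A)⁻¹B - 𝟙 ≠ 0`, the map `u ↦ ‖v u + (I-A)⁻¹ c‖₂²` is minimized at
`u* = -vᵀ(I-A)⁻¹c / ‖v‖²`, and the corresponding state `x* = (I-A)⁻¹(Bu* + c)` equals
`(I - A - (vᵀ𝟙)⁻¹ B vᵀ)⁻¹ c` whenever `vᵀ𝟙 ≠ 0` and that matrix is invertible. -/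
theorem optimal_steadyState_closedForm {n : ℕ}
    (A : Matrix (Fin n) (Fin n) ℝ) (B c : Fin n → ℝ)
    (hA : IsUnit (1 - A))
    (v : Fin n → ℝ)
    (hv : v = (1 - A)⁻¹ *ᵥ B - 1)
    (hv0 : v ≠ 0) :
    (∀ u : ℝ, ∑ i, ((-(v ⬝ᵥ ((1 - A)⁻¹ *ᵥ c)) / (v ⬝ᵥ v)) * v i +
          ((1 - A)⁻¹ *ᵥ c) i) ^ 2 ≤ ∑ i, (u * v i + ((1 - A)⁻¹ *ᵥ c) i) ^ 2) ∧
    (v ⬝ᵥ (1 : Fin n → ℝ) ≠ 0 →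
      IsUnit (1 - A - (v ⬝ᵥ (1 : Fin n → ℝ))⁻¹ • Matrix.vecMulVec B v) →
      (1 - A)⁻¹ *ᵥ ((-(v ⬝ᵥ ((1 - A)⁻¹ *ᵥ c)) / (v ⬝ᵥ v)) • B + c) =
        (1 - A - (v ⬝ᵥ (1 : Fin n → ℝ))⁻¹ • Matrix.vecMulVec B v)⁻¹ *ᵥ c) := by
  set M : Matrix (Fin n) (Fin n) ℝ := 1 - A with hM
  set w : Fin n → ℝ := M⁻¹ *ᵥ c with hw
  set S : ℝ := v ⬝ᵥ v with hS
  set P : ℝ := v ⬝ᵥ w with hP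
  have hSpos : 0 < S := by
    rcases lt_or_eq_of_le (Finset.sum_nonneg (fun i _ => mul_self_nonneg (v i)) :
        (0:ℝ) ≤ S) with h | h
    · exact h
    · exact absurd (dotProduct_self_eq_zero.mp h.symm) hv0
  have key : ∀ u : ℝ, ∑ i, (u * v i + w i) ^ 2 = u ^ 2 * S + 2 * u * P + ∑ i, (w i) ^ 2 := by
    intro u
    simp only [hS, hP, dotProduct, Finset.mul_sum]
    rw [← Finset.sum_add_distrib, ← Finset.sum_add_distrib]
    exact Finset.sum_congr rfl fun i _ => by ring
  constructor
  · intro u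
    rw [key, key]
    have h1 := sq_nonneg (u * S + P)
    have hS0 : S ≠ 0 := ne_of_gt hSpos
    have e : (-P / S) ^ 2 * S + 2 * (-P / S) * P = -(P ^ 2) / S := by
      field_simp; ring
    have h2 : -(P ^ 2) / S ≤ u ^ 2 * S + 2 * u * P := by
      rw [div_le_iff₀ hSpos]; nlinarith
    linarith
  · intro hs hN
    set s : ℝ := v ⬝ᵥ (1 : Fin n → ℝ) with hsd
    set u : ℝ := -P / S with hu
    set N : Matrix (Fin n) (Fin n) ℝ := M - s⁻¹ • Matrix.vecMulVec B v with hNdef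
    set x : Fin n → ℝ := M⁻¹ *ᵥ (u • B + c) with hx
    have hAdet : IsUnit M.det := (Matrix.isUnit_iff_isUnit_det M).mp hA
    have hNdet : IsUnit N.det := (Matrix.isUnit_iff_isUnit_det N).mp hN
    have hMB : M⁻¹ *ᵥ B = v + 1 := by rw [hv]; abel
    have hvx : v ⬝ᵥ x = u * s := by
      rw [hx, Matrix.mulVec_add, Matrix.mulVec_smul, dotProduct_add,
        dotProduct_smul, hMB, dotProduct_add, ← hw, ← hP, ← hS, ← hsd]
      field_simp [hu]
      have hSu : S * u = -P := by rw [hu]; field_simp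
      rw [smul_eq_mul]; linear_combination hSu
    have hNx : N *ᵥ x = c := by
      rw [hNdef, Matrix.sub_mulVec, Matrix.smul_mulVec, vecMulVec_mulVec', hvx]
      have : M *ᵥ x = u • B + c := by
        rw [hx, Matrix.mulVec_mulVec, Matrix.mul_nonsing_inv M hAdet, Matrix.one_mulVec]
      rw [this, smul_smul]
      have : s⁻¹ * (u * s) = u := by field_simp
      rw [this]; abel
    calc x = (N⁻¹ * N) *ᵥ x := by rw [Matrix.nonsing_inv_mul N hNdet, Matrix.one_mulVec]
    _ = N⁻¹ *ᵥ c := by rw [← Matrix.mulVec_mulVec, hNx]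
end

section
/- If ρ((I−Λ)F) < 1 where F is row-stochastic and Λ = diag(λ_i) with λ_i ∈ [0,1], then the matrix I − (I−Λ)F is invertible and (I − (I−Λ)F)^{-1} Λ is row-stochastic (nonnegative with all row sums equal to 1). -/
open Matrix Finset Filter

attribute [local instance] Matrix.linftyOpNormedRing Matrix.linftyOpNormedAlgebra

section aux
variable {n : ℕ}

lemma entry_nnnorm_le (A : Matrix (Fin n) (Fin n) ℂ) (i j : Fin n) : ‖A i j‖₊ ≤ ‖A‖₊ :=
  calc ‖A i j‖₊ ≤ ∑ j', ‖A i j'‖₊ :=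
        Finset.single_le_sum (f := fun j' => ‖A i j'‖₊) (fun _ _ => zero_le) (mem_univ j)
    _ ≤ ‖A‖₊ := by rw [Matrix.linfty_opNNNorm_def]; exact Finset.le_sup (f := fun i => ∑ j, ‖A i j‖₊) (mem_univ i)

lemma norm_pow_tendsto [Nonempty (Fin n)] (a : Matrix (Fin n) (Fin n) ℂ)
    (h : ∀ μ ∈ spectrum ℂ a, ‖μ‖ < 1) :
    Filter.Tendsto (fun k => ‖a ^ k‖) atTop (nhds 0) := by
  have hsp : spectralRadius ℂ a < 1 := by
    have := spectrum.spectralRadius_lt_of_forall_lt a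
      (r := 1) (fun z hz => by simpa [← NNReal.coe_lt_coe] using h z hz)
    simpa using this
  obtain ⟨r, hr1, hr2⟩ := ENNReal.lt_iff_exists_nnreal_btwn.mp hsp
  have hGel := spectrum.pow_nnnorm_pow_one_div_tendsto_nhds_spectralRadius a
  have hev : ∀ᶠ k : ℕ in atTop, ((‖a ^ k‖₊ : ENNReal)) ^ ((1:ℝ) / k) < (r : ENNReal) :=
    hGel.eventually_lt_const hr1
  have hev2 : ∀ᶠ k in atTop, ‖a ^ k‖ ≤ (r:ℝ) ^ k := by
    filter_upwards [hev, Filter.eventually_ge_atTop 1] with k hk hk1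
    have hk0 : (k:ℝ) ≠ 0 := by positivity
    have e1 : ((‖a ^ k‖₊ : ENNReal)) = (((‖a ^ k‖₊ : ENNReal)) ^ ((1:ℝ)/k)) ^ (k:ℕ) := by
      rw [← ENNReal.rpow_natCast _ k, ← ENNReal.rpow_mul, one_div, inv_mul_cancel₀ hk0,
        ENNReal.rpow_one]
    have e2 : ((‖a ^ k‖₊ : ENNReal)) ≤ ((r:ENNReal)) ^ (k:ℕ) := by
      rw [e1]; exact pow_le_pow_left₀ zero_le hk.le k
    rw [← ENNReal.coe_pow, ENNReal.coe_le_coe] at e2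
    calc ‖a ^ k‖ = ((‖a ^ k‖₊ : ℝ)) := rfl
      _ ≤ ((r ^ k : NNReal) : ℝ) := by exact_mod_cast e2
      _ = (r:ℝ) ^ k := by push_cast; ring
  have hr1' : (r:ℝ) < 1 := by
    have : (r : ENNReal) < 1 := hr2
    exact_mod_cast this
  exact squeeze_zero' (Filter.Eventually.of_forall fun k => norm_nonneg _) hev2
    (tendsto_pow_atTop_nhds_zero_of_lt_one r.coe_nonneg hr1')

lemma entry_pow_tendsto [Nonempty (Fin n)] (M : Matrix (Fin n) (Fin n) ℝ)
    (h : ∀ μ ∈ spectrum ℂ (M.map Complex.ofReal), ‖μ‖ < 1) (l j : Fin n) :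
    Filter.Tendsto (fun k => (M ^ k) l j) atTop (nhds 0) := by
  have hmap : ∀ k : ℕ, (M.map Complex.ofReal) ^ k = (M ^ k).map Complex.ofReal := by
    intro k
    induction k with
    | zero => simp [Matrix.map_one _ Complex.ofReal_zero Complex.ofReal_one]
    | succ k ih =>
        rw [pow_succ, pow_succ, ih]
        exact (Matrix.map_mul (L := M ^ k) (M := M) (f := Complex.ofRealHom)).symm
  have hnorm := norm_pow_tendsto (M.map Complex.ofReal) h
  refine squeeze_zero_norm (fun k => ?_) hnorm
  calc ‖(M ^ k) l j‖ = ‖(((M ^ k) l j : ℝ) : ℂ)‖ := by rw [Complex.norm_real]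
    _ = ‖((M.map Complex.ofReal) ^ k) l j‖ := by rw [hmap]; rfl
    _ ≤ ‖(M.map Complex.ofReal) ^ k‖ := by
        exact_mod_cast entry_nnnorm_le ((M.map Complex.ofReal) ^ k) l j

end aux

/-- If `ρ((I-Λ)F) < 1` with `F` row-stochastic and `λᵢ ∈ [0,1]`, then
`I - (I-Λ)F` is invertible and `(I - (I-Λ)F)⁻¹ Λ` is row-stochastic
(nonnegative with all row sums equal to 1). -/
theorem steadyState_influence_row_stochastic {n : ℕ}
    (F : Matrix (Fin n) (Fin n) ℝ) (lam : Fin n → ℝ)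
    (hF : ∀ i j, 0 ≤ F i j) (hFrow : ∀ i, ∑ j, F i j = 1)
    (hlam : ∀ i, lam i ∈ Set.Icc (0:ℝ) 1)
    (hρ : ∀ μ ∈ spectrum ℂ (((1 - Matrix.diagonal lam) * F).map Complex.ofReal), ‖μ‖ < 1) :
    IsUnit (1 - (1 - Matrix.diagonal lam) * F) ∧
    (∀ i j, 0 ≤ ((1 - (1 - Matrix.diagonal lam) * F)⁻¹ * Matrix.diagonal lam) i j) ∧
    ∀ i, ∑ j, ((1 - (1 - Matrix.diagonal lam) * F)⁻¹ * Matrix.diagonal lam) i j = 1 := by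
  set M : Matrix (Fin n) (Fin n) ℝ := (1 - Matrix.diagonal lam) * F with hMdef
  -- entries of M
  have hdiag : (1 : Matrix (Fin n) (Fin n) ℝ) - Matrix.diagonal lam
      = Matrix.diagonal (fun i => 1 - lam i) := by
    rw [← Matrix.diagonal_one, Matrix.diagonal_sub]
  have hMentry : ∀ i j, M i j = (1 - lam i) * F i j := by
    intro i j
    rw [hMdef, hdiag, Matrix.diagonal_mul]
  have hM0 : ∀ i j, 0 ≤ M i j := fun i j => by
    rw [hMentry]; exact mul_nonneg (sub_nonneg.mpr (hlam i).2) (hF i j)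
  have hMpow : ∀ (k : ℕ) i j, 0 ≤ (M ^ k) i j := by
    intro k
    induction k with
    | zero => intro i j; by_cases h : i = j <;> simp [h, Matrix.one_apply]
    | succ k ih =>
        intro i j
        rw [pow_succ, Matrix.mul_apply]
        exact Finset.sum_nonneg fun l _ => mul_nonneg (ih i l) (hM0 l j)
  -- invertibility
  have h1spec : (1:ℂ) ∉ spectrum ℂ (M.map Complex.ofReal) := by
    intro hmem
    have := hρ 1 hmem
    simp at this
  have hu : IsUnit (1 - M) := by
    rw [spectrum.notMem_iff] at h1spec
    rw [Matrix.isUnit_iff_isUnit_det]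
    rw [show (algebraMap ℂ (Matrix (Fin n) (Fin n) ℂ)) 1 - M.map Complex.ofReal
        = (1 - M).map Complex.ofReal by
      simp [Matrix.map_sub, Matrix.map_one _ Complex.ofReal_zero Complex.ofReal_one]] at h1spec
    have e2 : ((1 - M).map Complex.ofReal).det = Complex.ofReal ((1 - M).det) :=
      (RingHom.map_det Complex.ofRealHom (1 - M)).symm
    rw [Matrix.isUnit_iff_isUnit_det, e2] at h1spec
    rw [isUnit_iff_ne_zero] at h1spec ⊢
    simpa using h1spec
  have hdet : IsUnit (1 - M).det := (Matrix.isUnit_iff_isUnit_det _).mp hu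
  set B : Matrix (Fin n) (Fin n) ℝ := (1 - M)⁻¹ with hBdef
  have hBl : B * (1 - M) = 1 := Matrix.nonsing_inv_mul _ hdet
  have hBr : (1 - M) * B = 1 := Matrix.mul_nonsing_inv _ hdet
  -- nonnegativity of B
  have hBnonneg : ∀ i j, 0 ≤ B i j := by
    intro i j
    haveI : Nonempty (Fin n) := ⟨i⟩
    -- B = ∑_{k<N} M^k + B * M^N
    have hgeom : ∀ N : ℕ, B = (∑ k ∈ range N, M ^ k) + B * M ^ N := by
      intro N
      have h1 : (1 - M) * (∑ k ∈ range N, M ^ k) = 1 - M ^ N := by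
        have h2 := mul_geom_sum M N
        calc (1 - M) * ∑ k ∈ range N, M ^ k
            = -((M - 1) * ∑ k ∈ range N, M ^ k) := by rw [← neg_mul, neg_sub]
          _ = -(M ^ N - 1) := by rw [h2]
          _ = 1 - M ^ N := neg_sub _ _
      have h3 : (∑ k ∈ range N, M ^ k) = B - B * M ^ N := by
        calc (∑ k ∈ range N, M ^ k) = (B * (1 - M)) * (∑ k ∈ range N, M ^ k) := by
              rw [hBl, one_mul]
          _ = B * ((1 - M) * (∑ k ∈ range N, M ^ k)) := by rw [mul_assoc]
          _ = B * (1 - M ^ N) := by rw [h1]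
          _ = B - B * M ^ N := by rw [mul_sub, mul_one]
      rw [h3, sub_add_cancel]
    have hgentry : ∀ N : ℕ, B i j = (∑ k ∈ range N, (M ^ k) i j) + (B * M ^ N) i j := by
      intro N
      conv_lhs => rw [hgeom N]
      simp [Matrix.add_apply, Matrix.sum_apply]
    have htend : Filter.Tendsto (fun N => (B * M ^ N) i j) atTop (nhds 0) := by
      have : ∀ N, (B * M ^ N) i j = ∑ l, B i l * (M ^ N) l j := by
        intro N; rw [Matrix.mul_apply]
      simp only [this]
      have : Filter.Tendsto (fun N => ∑ l, B i l * (M ^ N) l j) atTop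
          (nhds (∑ l : Fin n, B i l * 0)) :=
        tendsto_finset_sum _ fun l _ =>
          (entry_pow_tendsto M hρ l j).const_mul (B i l)
      simpa using this
    have htend2 : Filter.Tendsto (fun N => ∑ k ∈ range N, (M ^ k) i j) atTop (nhds (B i j)) := by
      have : (fun N => ∑ k ∈ range N, (M ^ k) i j) = fun N => B i j - (B * M ^ N) i j := by
        funext N; rw [hgentry N]; ring
      rw [this]
      simpa using (tendsto_const_nhds (x := B i j)).sub htend
    exact ge_of_tendsto' htend2 fun N =>
      Finset.sum_nonneg fun k _ => hMpow k i j
  refine ⟨hu, ?_, ?_⟩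
  · intro i j
    rw [Matrix.mul_diagonal]
    exact mul_nonneg (hBnonneg i j) (hlam j).1
  · intro i
    have hrowM : ∀ l, ∑ j, M l j = 1 - lam l := by
      intro l
      simp only [hMentry]
      rw [← Finset.mul_sum, hFrow, mul_one]
    have hBid : B = 1 + B * M := by
      have h4 : B - B * M = 1 := by
        calc B - B * M = B * (1 - M) := by rw [mul_sub, mul_one]
          _ = 1 := hBl
      rw [← h4, sub_add_cancel]
    have hsum : ∑ j, B i j = 1 + ∑ l, B i l * (1 - lam l) := by
      conv_lhs => rw [hBid]
      rw [Finset.sum_congr rfl fun j _ => Matrix.add_apply (1 : Matrix (Fin n) (Fin n) ℝ) (B * M) i j]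
      rw [Finset.sum_add_distrib]
      congr 1
      · simp [Matrix.one_apply]
      · calc ∑ j, (B * M) i j = ∑ j, ∑ l, B i l * M l j := by
              simp [Matrix.mul_apply]
          _ = ∑ l, ∑ j, B i l * M l j := Finset.sum_comm
          _ = ∑ l, B i l * ∑ j, M l j := by simp [Finset.mul_sum]
          _ = ∑ l, B i l * (1 - lam l) := by
              exact Finset.sum_congr rfl fun l _ => by rw [hrowM l]
    have hexp : ∑ l, B i l * (1 - lam l) = (∑ l, B i l) - ∑ l, B i l * lam l := by
      rw [← Finset.sum_sub_distrib]
      exact Finset.sum_congr rfl fun l _ => by ring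
    have key : ∑ l, B i l * lam l = 1 := by
      rw [hexp] at hsum; linarith
    calc ∑ j, (B * Matrix.diagonal lam) i j = ∑ j, B i j * lam j := by
          simp [Matrix.mul_diagonal]
      _ = 1 := key
end
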